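/- For a binary tree B and each index i, the number of unit squares of the grid lying between the i-th north step of u(B) and the i-th north step of v(B) (which are at the same height) equals the right height of the i-th left edge of B in the symmetric order. -/

import Mathlib

/-- A lattice path on the square grid starting at `(0,0)`:
`true` = north step `N`, `false` = east step `E`. -/
abbrev LPath := List Bool

/-- The x-coordinate of the rightmost point at height `y` lying weakly above `v`,
i.e. the number of east steps of `v` occurring at height at most `y`. -/
def horizAbs (v : LPath) (y : ℕ) : ℕ :=
  ((List.range v.length).filter
    (fun i => v.getD i true = false ∧ (v.take i).count true ≤ y)).length

/-- The horizontal distance `horiz_v(p)` of the point `p` of `u` reached after `j` steps: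
the maximal number of east steps that can be appended at `p` without crossing `v`. -/
def horiz (v u : LPath) (j : ℕ) : ℕ :=
  horizAbs v ((u.take j).count true) - (u.take j).count false

/-- `u` has the same endpoints as `v` (same numbers of north and east steps) and
stays weakly above `v`. -/
def WeaklyAbove (u v : LPath) : Prop :=
  u.count true = v.count true ∧ u.count false = v.count false ∧
  ∀ j : ℕ, (u.take j).count false ≤ horizAbs v ((u.take j).count true)

/-- The covering relation of `Tam(v)`: the point `p` of `u` after `j` steps is preceded
by an east step and followed by a north step, `k` is the index of the first point `p'`
after `p` with `horiz_v(p') = horiz_v(p)`, and `u'` is obtained from `u` by exchanging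
that east step with the subpath of `u` from `p` to `p'`. -/
def TamCovers (v u u' : LPath) : Prop :=
  ∃ j k : ℕ, 0 < j ∧ j < k ∧ k ≤ u.length ∧
    u.getD (j - 1) true = false ∧ u.getD j false = true ∧
    horiz v u k = horiz v u j ∧
    (∀ l : ℕ, j < l → l < k → horiz v u l ≠ horiz v u j) ∧
    u' = u.take (j - 1) ++ (u.drop j).take (k - j) ++ [false] ++ u.drop k

/-- The order of `Tam(v)`: the reflexive-transitive closure of the covering relation. -/
def TamLe (v : LPath) : LPath → LPath → Prop := Relation.ReflTransGen (TamCovers v)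

/-- The underlying set of `Tam(v)`: all paths weakly above `v` with the same endpoints. -/
abbrev TamSet (v : LPath) := {u : LPath // WeaklyAbove u v}

/-- Binary trees: either empty, or a root vertex with left and right binary subtrees. -/
inductive BTree where
  | nil : BTree
  | node : BTree → BTree → BTree
deriving DecidableEq

/-- The alphabet `{a, ā, b, b̄}`. -/
inductive Letter where
  | a : Letter
  | abar : Letter
  | b : Letter
  | bbar : Letter
deriving DecidableEq

/-- The word `w(B)` obtained by walking clockwise around `B` starting at the root,
writing `a` (resp. `ā`) at the first (resp. second) traversal of each left edge and
`b` (resp. `b̄`) at the first (resp. second) traversal of each right edge. -/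
def wordOf : BTree → List Letter
  | .nil => []
  | .node l r =>
      (if l = BTree.nil then [] else Letter.a :: (wordOf l ++ [Letter.abar])) ++
      (if r = BTree.nil then [] else Letter.b :: (wordOf r ++ [Letter.bbar]))

/-- The path `u(B)`: the subword of `w(B)` in the letters `{ā, b̄}`, with `ā` read as a
north step (`true`) and `b̄` as an east step (`false`). -/
def uPath (B : BTree) : LPath :=
  (wordOf B).filterMap fun x =>
    match x with
    | Letter.abar => some true
    | Letter.bbar => some false
    | _ => none

/-- The canopy `v(B)`: the subword of `w(B)` in the letters `{ā, b}`, with `ā` read as a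
north step (`true`) and `b` as an east step (`false`). -/
def vPath (B : BTree) : LPath :=
  (wordOf B).filterMap fun x =>
    match x with
    | Letter.abar => some true
    | Letter.b => some false
    | _ => none

/-- The number of vertices of a binary tree. -/
def bsize : BTree → ℕ
  | .nil => 0
  | .node l r => bsize l + bsize r + 1

/-- The positions (indices) of the north steps of a path. -/
def northPositions (p : LPath) : List ℕ :=
  (List.range p.length).filter (fun j => p.getD j false = true)

/-- The x-coordinate of the `i`-th north step (0-indexed) of a path. -/
def xOfNorth (p : LPath) (i : ℕ) : ℕ :=
  (p.take ((northPositions p).getD i 0)).count false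

/-- The right heights of the left edges of a binary tree, listed in the symmetric
(in-)order of their father vertices; `h` is the right height of the root. -/
def leftEdgeRH : BTree → ℕ → List ℕ
  | .nil, _ => []
  | .node l r, h =>
      leftEdgeRH l h ++ (if l = BTree.nil then [] else [h]) ++ leftEdgeRH r (h + 1)

def xlist : LPath → List ℕ
  | [] => []
  | true :: t => 0 :: xlist t
  | false :: t => (xlist t).map (· + 1)

lemma xlist_length (p : LPath) : (xlist p).length = p.count true := by
  induction p with
  | nil => rfl
  | cons c t ih => cases c <;> simp [xlist, ih, List.count_cons]

lemma xlist_append (p q : LPath) :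
    xlist (p ++ q) = xlist p ++ (xlist q).map (· + p.count false) := by
  induction p with
  | nil => simp [xlist]
  | cons c t ih =>
    cases c <;> simp [xlist, ih, List.count_cons, List.map_map, Function.comp,
      Nat.add_assoc, Nat.add_comm 1]

lemma northPositions_cons (c : Bool) (t : LPath) :
    northPositions (c :: t) =
      (if c = true then [0] else []) ++ (northPositions t).map Nat.succ := by
  unfold northPositions
  rw [List.length_cons, List.range_succ_eq_map, List.filter_cons, List.filter_map]
  have h1 : List.filter ((fun j => decide ((c :: t).getD j false = true)) ∘ Nat.succ)
      (List.range t.length)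
      = List.filter (fun j => decide (t.getD j false = true)) (List.range t.length) := by
    apply List.filter_congr; intro j _; simp [List.getD]; congr
  rw [h1]; cases c <;> simp

lemma np_length (p : LPath) : (northPositions p).length = p.count true := by
  induction p with
  | nil => rfl
  | cons c t ih => cases c <;> simp [northPositions_cons, ih, List.count_cons]

lemma getD_map_succ (l : List ℕ) (i : ℕ) (h : i < l.length) :
    (l.map Nat.succ).getD i 0 = l.getD i 0 + 1 := by
  rw [List.getD_eq_getElem _ _ (by simpa using h), List.getElem_map,
    List.getD_eq_getElem _ _ h]

lemma getD_map_add (a : ℕ) (l : List ℕ) (i : ℕ) (h : i < l.length) :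
    (l.map (· + a)).getD i 0 = l.getD i 0 + a := by
  rw [List.getD_eq_getElem _ _ (by simpa using h), List.getElem_map,
    List.getD_eq_getElem _ _ h]

lemma xOfNorth_eq (p : LPath) (i : ℕ) (hi : i < p.count true) :
    xOfNorth p i = (xlist p).getD i 0 := by
  induction p generalizing i with
  | nil => simp at hi
  | cons c t ih =>
    cases c with
    | true =>
      cases i with
      | zero => simp [xOfNorth, northPositions_cons, xlist]
      | succ i =>
        have hi' : i < t.count true := by simpa [List.count_cons] using hi
        have hlen : i < (northPositions t).length := by rw [np_length]; exact hi'
        have := ih i hi'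
        simp only [xOfNorth, List.getD] at this
        simp only [xOfNorth, northPositions_cons, reduceIte, List.singleton_append,
          List.getD_cons_succ, xlist]
        rw [getD_map_succ _ _ hlen, List.take_succ_cons]
        simp [List.count_cons, this]
    | false =>
      have hi' : i < t.count true := by simpa [List.count_cons] using hi
      have hlen : i < (northPositions t).length := by rw [np_length]; exact hi'
      have hx : i < (xlist t).length := by rw [xlist_length]; exact hi'
      simp only [xOfNorth, northPositions_cons, xlist]
      have := ih i hi'
      simp only [xOfNorth, List.getD] at this
      rw [if_neg (by simp), List.nil_append, getD_map_succ _ _ hlen,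
        getD_map_add _ _ _ hx, List.take_succ_cons]
      simp [List.count_cons, this]

lemma uPath_node (l r : BTree) :
    uPath (.node l r) =
      (if l = BTree.nil then [] else uPath l ++ [true]) ++
      (if r = BTree.nil then [] else uPath r ++ [false]) := by
  have hw : wordOf (.node l r) =
      (if l = BTree.nil then [] else Letter.a :: (wordOf l ++ [Letter.abar])) ++
      (if r = BTree.nil then [] else Letter.b :: (wordOf r ++ [Letter.bbar])) := rfl
  simp only [uPath, hw]
  by_cases h1 : l = BTree.nil <;> by_cases h2 : r = BTree.nil <;>
    simp [h1, h2, List.filterMap_append]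

lemma vPath_node (l r : BTree) :
    vPath (.node l r) =
      (if l = BTree.nil then [] else vPath l ++ [true]) ++
      (if r = BTree.nil then [] else false :: vPath r) := by
  have hw : wordOf (.node l r) =
      (if l = BTree.nil then [] else Letter.a :: (wordOf l ++ [Letter.abar])) ++
      (if r = BTree.nil then [] else Letter.b :: (wordOf r ++ [Letter.bbar])) := rfl
  simp only [vPath, hw]
  by_cases h1 : l = BTree.nil <;> by_cases h2 : r = BTree.nil <;>
    simp [h1, h2, List.filterMap_append]

@[simp] lemma leftEdgeRH_nil (h : ℕ) : leftEdgeRH BTree.nil h = [] := rfl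

lemma leftEdgeRH_map (B : BTree) (h : ℕ) :
    leftEdgeRH B h = (leftEdgeRH B 0).map (· + h) := by
  induction B generalizing h with
  | nil => rfl
  | node l r ihl ihr =>
    simp only [leftEdgeRH, List.map_append, Nat.zero_add]
    rw [ihl h, ihr (h + 1), ihr 1]
    congr 1
    · congr 1
      split <;> simp
    · simp [List.map_map, Function.comp, Nat.add_assoc, Nat.add_comm 1]

lemma counts (B : BTree) :
    (uPath B).count true = (vPath B).count true ∧
    (uPath B).count false = (vPath B).count false ∧
    (leftEdgeRH B 0).length = (uPath B).count true := by
  induction B with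
  | nil => simp [uPath, vPath, wordOf, leftEdgeRH]
  | node l r ihl ihr =>
    obtain ⟨hl1, hl2, hl3⟩ := ihl
    obtain ⟨hr1, hr2, hr3⟩ := ihr
    rw [uPath_node, vPath_node]
    unfold leftEdgeRH
    by_cases h1 : l = BTree.nil <;> by_cases h2 : r = BTree.nil <;>
      simp [h1, h2, List.count_append, List.count_cons, leftEdgeRH_map r 1] <;>
      omega

lemma zip_map_right (b : ℕ) (xs ys : List ℕ) :
    List.zipWith (· + ·) xs (ys.map (· + b)) =
      (List.zipWith (· + ·) xs ys).map (· + b) := by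
  induction xs generalizing ys with
  | nil => simp
  | cons x xs ih => cases ys <;> simp [ih] <;> omega

lemma zip_map_left (a : ℕ) (xs ys : List ℕ) :
    List.zipWith (· + ·) (xs.map (· + a)) ys =
      (List.zipWith (· + ·) xs ys).map (· + a) := by
  induction xs generalizing ys with
  | nil => simp
  | cons x xs ih => cases ys <;> simp [ih] <;> omega

lemma zip_map_add (a b : ℕ) (xs ys : List ℕ) :
    List.zipWith (· + ·) (xs.map (· + a)) (ys.map (· + b)) =
      (List.zipWith (· + ·) xs ys).map (· + (a + b)) := by
  induction xs generalizing ys with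
  | nil => simp
  | cons x xs ih => cases ys <;> simp [ih] <;> omega

lemma xlist_v (B : BTree) :
    xlist (vPath B) = List.zipWith (· + ·) (xlist (uPath B)) (leftEdgeRH B 0) := by
  induction B with
  | nil => simp [uPath, vPath, wordOf, xlist]
  | node l r ihl ihr =>
    obtain ⟨hl1, hl2, hl3⟩ := counts l
    obtain ⟨hr1, hr2, hr3⟩ := counts r
    rw [uPath_node, vPath_node]
    have hLr : leftEdgeRH r 1 = (leftEdgeRH r 0).map (· + 1) := leftEdgeRH_map r 1
    by_cases h1 : l = BTree.nil <;> by_cases h2 : r = BTree.nil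
    · simp [h1, h2, xlist, leftEdgeRH]
    · -- l = nil, r ≠ nil
      simp only [h1, h2, if_pos, if_neg, ite_true, ite_false, List.nil_append]
      rw [xlist_append]
      have : xlist ((false : Bool) :: vPath r) = (xlist (vPath r)).map (· + 1) := rfl
      rw [this, ihr]
      simp [leftEdgeRH, h1, h2, hLr, xlist, zip_map_right]
    · -- l ≠ nil, r = nil
      simp only [h1, h2, ite_true, ite_false, List.append_nil]
      rw [xlist_append, xlist_append, ihl]
      have hlen : (xlist (uPath l)).length = (leftEdgeRH l 0).length := by
        rw [xlist_length, hl3]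
      simp only [leftEdgeRH, h1, h2, ite_false, leftEdgeRH_nil, List.append_nil]
      rw [List.zipWith_append hlen]
      simp [xlist, hl2]
    · -- both nonempty
      simp only [h1, h2, ite_false]
      have e1 : xlist ((uPath l ++ [true]) ++ (uPath r ++ [false]))
          = (xlist (uPath l) ++ [(uPath l).count false])
            ++ ((xlist (uPath r)).map (· + (uPath l).count false)) := by
        rw [xlist_append, xlist_append, xlist_append]
        simp [xlist, List.count_append, List.map_map, Function.comp]
      have e2 : xlist ((vPath l ++ [true]) ++ ((false : Bool) :: vPath r))
          = (xlist (vPath l) ++ [(vPath l).count false])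
            ++ ((xlist (vPath r)).map (· + ((uPath l).count false + 1))) := by
        rw [xlist_append, xlist_append]
        have : xlist ((false : Bool) :: vPath r) = (xlist (vPath r)).map (· + 1) := rfl
        rw [this]
        simp [xlist, List.count_append, List.map_map, Function.comp, hl2]
        intro a _
        omega
      rw [e1, e2, ihl, ihr, ← hl2]
      have hlen : (xlist (uPath l)).length = (leftEdgeRH l 0).length := by
        rw [xlist_length, hl3]
      have hL : leftEdgeRH (BTree.node l r) 0
          = (leftEdgeRH l 0 ++ [0]) ++ (leftEdgeRH r 0).map (· + 1) := by
        simp [leftEdgeRH, h1, hLr]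
      rw [hL, List.zipWith_append (by simp [hlen]),
        List.zipWith_append hlen, zip_map_right]
      simp [zip_map_left, List.map_map, Function.comp, Nat.add_assoc]

/-- **Lemma 6.** For a binary tree `B`, the number of unit squares between the `i`-th
north step of `u(B)` and the `i`-th north step of `v(B)` (they are at the same height,
and the number of unit squares is the difference of their x-coordinates) equals the
right height of the `i`-th left edge of `B` in the symmetric order. -/
theorem squares_eq_right_height (B : BTree) (i : ℕ) (hi : i < (vPath B).count true) :
    xOfNorth (vPath B) i = xOfNorth (uPath B) i + (leftEdgeRH B 0).getD i 0 := by
  obtain ⟨h1, h2, h3⟩ := counts B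
  have hiu : i < (uPath B).count true := by rw [h1]; exact hi
  have hxu : i < (xlist (uPath B)).length := by rw [xlist_length]; exact hiu
  have hL : i < (leftEdgeRH B 0).length := by rw [h3]; exact hiu
  rw [xOfNorth_eq _ _ hi, xOfNorth_eq _ _ hiu, xlist_v]
  rw [List.getD_eq_getElem _ _ (by rw [List.length_zipWith]; omega),
    List.getElem_zipWith, List.getD_eq_getElem _ _ hxu, List.getD_eq_getElem _ _ hL]
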